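/- With A_ε and A₀ as above, for every point q ∈ ℝ³ the indicator functions converge: lim_{ε → 0⁺} χ_{A_ε}(q) = χ_{A₀}(q). -/

import Mathlib

open Real Filter

/-- Inverse hyperbolic cosine on `[1, ∞)`. -/
noncomputable def arcosh (x : ℝ) : ℝ := Real.log (x + Real.sqrt (x ^ 2 - 1))

/-- Attainable set of the `ε`-Lorentzian problem on the Heisenberg group. -/
def attainSet (ε : ℝ) : Set (ℝ × ℝ × ℝ) :=
  {p | p.1 ≥ |p.2.1| ∧
    |p.2.2| ≤ ε ^ 2 / 2 *
      (sinh (_root_.arcosh ((p.1 ^ 2 - p.2.1 ^ 2) / (2 * ε ^ 2) + 1))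
        + _root_.arcosh ((p.1 ^ 2 - p.2.1 ^ 2) / (2 * ε ^ 2) + 1))}

/-- Attainable set of the limiting sub-Lorentzian problem. -/
def attainSet₀ : Set (ℝ × ℝ × ℝ) :=
  {p | p.1 ≥ 0 ∧ 4 * |p.2.2| ≤ p.1 ^ 2 - p.2.1 ^ 2}

lemma arcosh_nonneg {u : ℝ} (hu : 1 ≤ u) : 0 ≤ _root_.arcosh u :=
  Real.log_nonneg (by nlinarith [Real.sqrt_nonneg (u ^ 2 - 1)])

lemma sinh_arcosh {u : ℝ} (hu : 1 ≤ u) :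
    Real.sinh (_root_.arcosh u) = Real.sqrt (u ^ 2 - 1) := by
  have h1 : (0:ℝ) ≤ u ^ 2 - 1 := by nlinarith
  have hs := Real.sq_sqrt h1
  have hsn := Real.sqrt_nonneg (u ^ 2 - 1)
  have ha : 0 < u + Real.sqrt (u ^ 2 - 1) := by nlinarith
  unfold _root_.arcosh
  rw [Real.sinh_eq, Real.exp_neg, Real.exp_log ha]
  have hinv : (u + Real.sqrt (u ^ 2 - 1))⁻¹ = u - Real.sqrt (u ^ 2 - 1) := by
    rw [inv_eq_one_div, div_eq_iff ha.ne']
    nlinarith [hs]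
  rw [hinv]; ring

lemma arcosh_le {u : ℝ} (hu : 1 ≤ u) : _root_.arcosh u ≤ 2 * Real.sqrt (2 * u) := by
  have h1 : (0:ℝ) ≤ u ^ 2 - 1 := by nlinarith
  have hsn := Real.sqrt_nonneg (u ^ 2 - 1)
  have hle : Real.sqrt (u ^ 2 - 1) ≤ u := by
    calc Real.sqrt (u ^ 2 - 1) ≤ Real.sqrt (u ^ 2) := Real.sqrt_le_sqrt (by nlinarith)
    _ = u := by rw [Real.sqrt_sq (by linarith)]
  have ha : 0 < u + Real.sqrt (u ^ 2 - 1) := by nlinarith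
  have hsa : 0 < Real.sqrt (u + Real.sqrt (u ^ 2 - 1)) := Real.sqrt_pos.2 ha
  have hlog : Real.log (u + Real.sqrt (u ^ 2 - 1)) =
      2 * Real.log (Real.sqrt (u + Real.sqrt (u ^ 2 - 1))) := by
    rw [Real.log_sqrt ha.le]; ring
  have h2 : Real.log (Real.sqrt (u + Real.sqrt (u ^ 2 - 1))) ≤
      Real.sqrt (u + Real.sqrt (u ^ 2 - 1)) - 1 :=
    Real.log_le_sub_one_of_pos hsa
  have h3 : Real.sqrt (u + Real.sqrt (u ^ 2 - 1)) ≤ Real.sqrt (2 * u) :=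
    Real.sqrt_le_sqrt (by linarith)
  unfold _root_.arcosh
  rw [hlog]
  nlinarith [h2, h3]

theorem stmt_9 (q : ℝ × ℝ × ℝ) :
    Tendsto (fun ε : ℝ => (attainSet ε).indicator (fun _ => (1 : ℝ)) q)
      (nhdsWithin 0 (Set.Ioi 0))
      (nhds (attainSet₀.indicator (fun _ => (1 : ℝ)) q)) := by
  by_cases h0 : q ∈ attainSet₀
  · -- q ∈ A₀ : q ∈ A_ε for every ε > 0
    obtain ⟨hx, hz⟩ := h0
    have hmem : ∀ ε ∈ Set.Ioi (0:ℝ), q ∈ attainSet ε := by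
      intro ε hε
      have hε' : (0:ℝ) < ε := hε
      have hε2 : (0:ℝ) < ε ^ 2 := by positivity
      set u : ℝ := (q.1 ^ 2 - q.2.1 ^ 2) / (2 * ε ^ 2) + 1 with hu_def
      have hs : (0:ℝ) ≤ q.1 ^ 2 - q.2.1 ^ 2 := le_trans (by positivity) hz
      have hu : 1 ≤ u := by
        rw [hu_def]
        have : 0 ≤ (q.1 ^ 2 - q.2.1 ^ 2) / (2 * ε ^ 2) := by positivity
        linarith
      constructor
      · -- |y| ≤ x
        show |q.2.1| ≤ q.1
        calc |q.2.1| = Real.sqrt (q.2.1 ^ 2) := (Real.sqrt_sq_eq_abs _).symm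
          _ ≤ Real.sqrt (q.1 ^ 2) := Real.sqrt_le_sqrt (by linarith)
          _ = q.1 := Real.sqrt_sq hx
      · show |q.2.2| ≤ ε ^ 2 / 2 * (Real.sinh (_root_.arcosh u) + _root_.arcosh u)
        have h1 := _root_.sinh_arcosh hu
        have h2 := _root_.arcosh_nonneg hu
        have h3 : u - 1 ≤ Real.sqrt (u ^ 2 - 1) := by
          calc u - 1 = Real.sqrt ((u - 1) ^ 2) := (Real.sqrt_sq (by linarith)).symm
            _ ≤ Real.sqrt (u ^ 2 - 1) := Real.sqrt_le_sqrt (by nlinarith)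
        have h4 : u - 1 = (q.1 ^ 2 - q.2.1 ^ 2) / (2 * ε ^ 2) := by rw [hu_def]; ring
        have h5 : ε ^ 2 / 2 * (u - 1) = (q.1 ^ 2 - q.2.1 ^ 2) / 4 := by
          rw [h4]; field_simp; ring
        have h6 : |q.2.2| ≤ (q.1 ^ 2 - q.2.1 ^ 2) / 4 := by linarith
        rw [h1]
        calc |q.2.2| ≤ ε ^ 2 / 2 * (u - 1) := by linarith
          _ ≤ ε ^ 2 / 2 * (Real.sqrt (u ^ 2 - 1) + _root_.arcosh u) := by
              apply mul_le_mul_of_nonneg_left (by linarith) (by positivity)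
    have heq : (fun ε : ℝ => (attainSet ε).indicator (fun _ => (1:ℝ)) q)
        =ᶠ[nhdsWithin 0 (Set.Ioi 0)] fun _ => (1:ℝ) := by
      filter_upwards [self_mem_nhdsWithin] with ε hε
      exact Set.indicator_of_mem (hmem ε hε) _
    rw [Set.indicator_of_mem (show q ∈ attainSet₀ from ⟨hx, hz⟩)]
    exact Tendsto.congr' heq.symm tendsto_const_nhds
  · rw [Set.indicator_of_notMem h0]
    by_cases hxy : |q.2.1| ≤ q.1
    · -- x ≥ |y| but 4|z| > x² − y²
      have hx : (0:ℝ) ≤ q.1 := le_trans (abs_nonneg _) hxy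
      have hs : (0:ℝ) ≤ q.1 ^ 2 - q.2.1 ^ 2 := by
        have := sq_abs q.2.1
        nlinarith [abs_nonneg q.2.1]
      have hz : q.1 ^ 2 - q.2.1 ^ 2 < 4 * |q.2.2| := by
        by_contra h
        exact h0 ⟨hx, le_of_not_gt h⟩
      set s : ℝ := q.1 ^ 2 - q.2.1 ^ 2 with hs_def
      have hlt : s / 4 < |q.2.2| := by linarith
      have hcont : Continuous fun ε : ℝ =>
          s / 4 + ε ^ 2 / 2 + Real.sqrt (s * ε ^ 2 + 2 * ε ^ 4) := by
        fun_prop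
      have hlim : Tendsto (fun ε : ℝ =>
          s / 4 + ε ^ 2 / 2 + Real.sqrt (s * ε ^ 2 + 2 * ε ^ 4))
          (nhdsWithin 0 (Set.Ioi 0)) (nhds (s / 4)) := by
        have h := hcont.tendsto 0
        simp only [ne_eq, OfNat.ofNat_ne_zero, not_false_eq_true, zero_pow, mul_zero,
          zero_div, add_zero, zero_add, Real.sqrt_zero] at h
        exact h.mono_left nhdsWithin_le_nhds
      have hev : ∀ᶠ ε in nhdsWithin (0:ℝ) (Set.Ioi 0),
          s / 4 + ε ^ 2 / 2 + Real.sqrt (s * ε ^ 2 + 2 * ε ^ 4) < |q.2.2| :=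
        hlim.eventually_lt_const hlt
      have heq : (fun ε : ℝ => (attainSet ε).indicator (fun _ => (1:ℝ)) q)
          =ᶠ[nhdsWithin 0 (Set.Ioi 0)] fun _ => (0:ℝ) := by
        filter_upwards [hev, self_mem_nhdsWithin] with ε hg hε
        have hε' : (0:ℝ) < ε := hε
        have hε2 : (0:ℝ) < ε ^ 2 := by positivity
        have hnot : q ∉ attainSet ε := by
          intro hmem
          obtain ⟨-, h2⟩ := hmem
          set u : ℝ := (q.1 ^ 2 - q.2.1 ^ 2) / (2 * ε ^ 2) + 1 with hu_def
          have hu : 1 ≤ u := by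
            rw [hu_def]
            have : 0 ≤ (q.1 ^ 2 - q.2.1 ^ 2) / (2 * ε ^ 2) := by positivity
            linarith
          have hsinh : Real.sinh (_root_.arcosh u) ≤ u := by
            rw [_root_.sinh_arcosh hu]
            calc Real.sqrt (u ^ 2 - 1) ≤ Real.sqrt (u ^ 2) := Real.sqrt_le_sqrt (by nlinarith)
              _ = u := Real.sqrt_sq (by linarith)
          have harc := arcosh_le hu
          have hkey : ε ^ 2 * Real.sqrt (2 * u) = Real.sqrt (s * ε ^ 2 + 2 * ε ^ 4) := by
            rw [show s * ε ^ 2 + 2 * ε ^ 4 = (ε ^ 2) ^ 2 * (2 * u) by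
              rw [hu_def, hs_def]; field_simp]
            rw [Real.sqrt_mul (sq_nonneg (ε ^ 2)) (2 * u), Real.sqrt_sq hε2.le]
          have hmain : ε ^ 2 / 2 * (Real.sinh (_root_.arcosh u) + _root_.arcosh u) ≤
              s / 4 + ε ^ 2 / 2 + Real.sqrt (s * ε ^ 2 + 2 * ε ^ 4) := by
            have hu2 : ε ^ 2 / 2 * u = s / 4 + ε ^ 2 / 2 := by
              rw [hu_def, hs_def]; field_simp; ring
            calc ε ^ 2 / 2 * (Real.sinh (_root_.arcosh u) + _root_.arcosh u)
                ≤ ε ^ 2 / 2 * (u + 2 * Real.sqrt (2 * u)) :=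
                  mul_le_mul_of_nonneg_left (by linarith) (by positivity)
              _ = ε ^ 2 / 2 * u + ε ^ 2 * Real.sqrt (2 * u) := by ring
              _ = s / 4 + ε ^ 2 / 2 + Real.sqrt (s * ε ^ 2 + 2 * ε ^ 4) := by
                  rw [hu2, hkey]
          exact absurd (le_trans h2 hmain) (not_le.2 hg)
        exact Set.indicator_of_notMem hnot _
      exact Tendsto.congr' heq.symm tendsto_const_nhds
    · -- x < |y| : never in A_ε
      have heq : (fun ε : ℝ => (attainSet ε).indicator (fun _ => (1:ℝ)) q)
          =ᶠ[nhdsWithin 0 (Set.Ioi 0)] fun _ => (0:ℝ) := by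
        filter_upwards with ε
        exact Set.indicator_of_notMem (fun h => hxy h.1) _
      exact Tendsto.congr' heq.symm tendsto_const_nhds
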